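/- (Davis prime avoidance) Let A be a commutative ring, x ∈ A an element, I an ideal of A, and 𝔮_1, …, 𝔮_n finitely many prime ideals of A. If for every i the ideal (x) + I is not contained in 𝔮_i, then there exists y ∈ I such that x + y ∉ 𝔮_i for every i. -/

import Mathlib

open Classical in
lemma davis_aux (A : Type) [CommRing A] (x : A) (I : Ideal A) :
    ∀ (S : Finset (Ideal A)), (∀ q ∈ S, q.IsPrime) →
    (∀ q ∈ S, ¬ (Ideal.span {x} ⊔ I ≤ q)) →
    ∃ y ∈ I, ∀ q ∈ S, x + y ∉ q := by
  intro S
  induction S using Finset.strongInduction with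
  | _ S ih =>
    intro hprime hS
    rcases S.eq_empty_or_nonempty with rfl | hne
    · exact ⟨0, I.zero_mem, by simp⟩
    obtain ⟨q₀, hq₀S, hq₀min⟩ := S.exists_minimal hne
    obtain ⟨y, hyI, hy⟩ := ih (S.erase q₀) (S.erase_ssubset hq₀S)
      (fun q hq => hprime q (S.erase_subset _ hq))
      (fun q hq => hS q (S.erase_subset _ hq))
    by_cases hxy : x + y ∈ q₀
    · -- need z ∈ I, z ∈ q for q ∈ erase, z ∉ q₀
      have hIq₀ : ¬ I ≤ q₀ := by
        intro hle
        refine hS q₀ hq₀S (sup_le ?_ hle)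
        rw [Ideal.span_le, Set.singleton_subset_iff]
        have : x = (x + y) - y := by ring
        rw [this]
        exact q₀.sub_mem hxy (hle hyI)
      obtain ⟨t, htI, htq₀⟩ := SetLike.not_le_iff_exists.mp hIq₀
      have hch : ∀ q ∈ S.erase q₀, ∃ s, s ∈ q ∧ s ∉ q₀ := by
        intro q hq
        apply SetLike.not_le_iff_exists.mp
        intro hle
        rcases eq_or_lt_of_le hle with rfl | hlt
        · exact (S.notMem_erase q) hq
        · exact (lt_irrefl q) (lt_of_lt_of_le hlt (hq₀min (S.erase_subset _ hq) hlt.le))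
      choose s hs1 hs2 using hch
      set z := t * ∏ q ∈ (S.erase q₀).attach, s q q.2 with hz
      refine ⟨y + z, I.add_mem hyI (I.mul_mem_right _ htI), ?_⟩
      intro q hq
      rw [← add_assoc]
      by_cases hqq₀ : q = q₀
      · rw [hqq₀]
        intro hmem
        have hzq₀ : z ∉ q₀ := by
          intro hzmem
          haveI := hprime q₀ hq₀S
          rcases (Ideal.IsPrime.mem_or_mem ‹q₀.IsPrime› hzmem) with h1 | h2
          · exact htq₀ h1
          · rw [Ideal.IsPrime.prod_mem_iff] at h2
            obtain ⟨⟨q', hq'⟩, _, hmem'⟩ := h2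
            exact hs2 q' hq' hmem'
        exact hzq₀ (by simpa using q₀.sub_mem hmem hxy)
      · have hqe : q ∈ S.erase q₀ := Finset.mem_erase.mpr ⟨hqq₀, hq⟩
        have hzq : z ∈ q := by
          apply q.mul_mem_left
          rw [← Finset.mul_prod_erase (S.erase q₀).attach (fun p => s p.1 p.2)
            (Finset.mem_attach _ (⟨q, hqe⟩ : {p // p ∈ S.erase q₀}))]
          exact q.mul_mem_right _ (hs1 q hqe)
        intro hmem
        exact hy q hqe (by simpa using q.sub_mem hmem hzq)
    · refine ⟨y, hyI, fun q hq => ?_⟩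
      by_cases hqq₀ : q = q₀
      · exact hqq₀ ▸ hxy
      · exact hy q (Finset.mem_erase.mpr ⟨hqq₀, hq⟩)

/-- **Davis prime avoidance**: if `(x) + I` is not contained in any of the prime ideals
`𝔮 1, …, 𝔮 n`, then some element of the coset `x + I` avoids all of them. -/
theorem davis_prime_avoidance
    (A : Type) [CommRing A] (x : A) (I : Ideal A)
    (n : ℕ) (𝔮 : Fin n → Ideal A) (h𝔮 : ∀ i, (𝔮 i).IsPrime)
    (h : ∀ i, ¬ (Ideal.span {x} ⊔ I ≤ 𝔮 i)) :
    ∃ y ∈ I, ∀ i, x + y ∉ 𝔮 i := by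
  classical
  obtain ⟨y, hyI, hy⟩ := davis_aux A x I (Finset.image 𝔮 Finset.univ)
    (by simpa using fun i => h𝔮 i) (by simpa using fun i => h i)
  exact ⟨y, hyI, fun i => hy _ (Finset.mem_image_of_mem 𝔮 (Finset.mem_univ i))⟩
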